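/- Fix an integer N ≥ 3 and a real L ≥ 0. Let W_1, …, W_{N−1} be mutually independent finite-valued random variables with H(W_k) = L for each k, let Q be a finite-valued random variable with I(⟨W_1,…,W_{N−1}⟩ ; Q) = 0, and let A_n^{[k]} (for n ∈ {1,…,N}, k ∈ {1,…,N−1}) be finite-valued random variables satisfying: (i) H(A_1^{[k]} | ⟨W_1, Q⟩) = 0 and H(A_N^{[k]} | ⟨W_{N−1}, Q⟩) = 0 for all k, and H(A_n^{[k]} | ⟨W_{n−1}, W_n, Q⟩) = 0 for all 2 ≤ n ≤ N−1 and all k; (ii) H(W_k | ⟨A_1^{[k]}, …, A_N^{[k]}, Q⟩) = 0 for all k ∈ {1,…,N−1}; (iii) for every n with 2 ≤ n ≤ N−1 and every subset S ⊆ {1,…,N−1}, H(A_n^{[n]} | ⟨W_S, Q⟩) = H(A_n^{[n−1]} | ⟨W_S, Q⟩), where W_S denotes the joint random variable of {W_ℓ : ℓ ∈ S}. Then ∑_{k=1}^{N−1} ∑_{n=1}^{N} H(A_n^{[k]}) ≥ (2N − 4)·L. -/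

import Mathlib

open MeasureTheory

/-- Shannon entropy (in nats) of a random variable `X` taking finitely many values,
with the convention `0 log 0 = 0`. -/
noncomputable def entropy {Ω : Type*} [MeasurableSpace Ω] {S : Type*} [Fintype S]
    (μ : Measure Ω) (X : Ω → S) : ℝ :=
  -∑ s : S, (μ (X ⁻¹' {s})).toReal * Real.log (μ (X ⁻¹' {s})).toReal

/-- Conditional entropy `H(X | Y)`, defined via the chain rule `H(X | Y) = H(X, Y) − H(Y)`. -/
noncomputable def condEntropy {Ω : Type*} [MeasurableSpace Ω] {S T : Type*} [Fintype S]
    [Fintype T] (μ : Measure Ω) (X : Ω → S) (Y : Ω → T) : ℝ :=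
  entropy μ (fun ω => (X ω, Y ω)) - entropy μ Y

/-- Mutual information `I(X ; Y) = H(X) − H(X | Y)`. -/
noncomputable def mutualInfo {Ω : Type*} [MeasurableSpace Ω] {S T : Type*} [Fintype S]
    [Fintype T] (μ : Measure Ω) (X : Ω → S) (Y : Ω → T) : ℝ :=
  entropy μ X - condEntropy μ X Y

/-- Conditional mutual information `I(X ; Y | Z) = H(X | Z) + H(Y | Z) − H(X, Y | Z)`. -/
noncomputable def condMutualInfo {Ω : Type*} [MeasurableSpace Ω] {S T U : Type*} [Fintype S]
    [Fintype T] [Fintype U] (μ : Measure Ω) (X : Ω → S) (Y : Ω → T) (Z : Ω → U) : ℝ :=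
  condEntropy μ X Z + condEntropy μ Y Z - condEntropy μ (fun ω => (X ω, Y ω)) Z

set_option linter.unusedSectionVars false
set_option linter.unusedVariables false

open Finset

namespace PIRaux

open scoped Classical

variable {Γ : Type*} [Fintype Γ]

noncomputable def pm (P : Γ → ℝ) {S : Type*} [Fintype S] (g : Γ → S) (s : S) : ℝ :=
  ∑ γ, if g γ = s then P γ else 0

noncomputable def He (P : Γ → ℝ) {S : Type*} [Fintype S] (g : Γ → S) : ℝ :=
  -∑ s, pm P g s * Real.log (pm P g s)

noncomputable def Hc (P : Γ → ℝ) {S T : Type*} [Fintype S] [Fintype T]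
    (g : Γ → S) (h : Γ → T) : ℝ :=
  He P (fun γ => (g γ, h γ)) - He P h

variable {P : Γ → ℝ} {S T U V : Type*} [Fintype S] [Fintype T] [Fintype U] [Fintype V]

lemma pm_nonneg (hP0 : ∀ γ, 0 ≤ P γ) (g : Γ → S) (s : S) : 0 ≤ pm P g s := by
  refine Finset.sum_nonneg fun γ _ => ?_
  split <;> simp [hP0]

lemma sum_pm (g : Γ → S) : ∑ s, pm P g s = ∑ γ, P γ := by
  unfold pm
  rw [Finset.sum_comm]
  refine Finset.sum_congr rfl fun γ _ => ?_
  simp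

lemma pm_le_sum (hP0 : ∀ γ, 0 ≤ P γ) (g : Γ → S) (s : S) : pm P g s ≤ ∑ γ, P γ := by
  refine Finset.sum_le_sum fun γ _ => ?_
  split <;> simp [hP0]

/-- decomposition of a pushforward along a further map -/
lemma pm_comp (F : S → T) (g : Γ → S) (t : T) :
    pm P (fun γ => F (g γ)) t = ∑ s, if F s = t then pm P g s else 0 := by
  have hrw : ∀ s : S, (if F s = t then pm P g s else 0)
      = ∑ γ, if F s = t then (if g γ = s then P γ else 0) else 0 := by
    intro s; split <;> simp [pm]
  rw [Finset.sum_congr rfl fun s _ => hrw s, Finset.sum_comm]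
  unfold pm
  refine Finset.sum_congr rfl fun γ _ => ?_
  by_cases h : F (g γ) = t
  · rw [Finset.sum_eq_single (g γ)]
    · simp [h]
    · intro b _ hb
      simp [Ne.symm hb]
    · simp
  · rw [if_neg h, Finset.sum_eq_zero]
    intro b _
    by_cases hb : g γ = b
    · subst hb; simp [h]
    · have : (if g γ = b then P γ else 0) = 0 := if_neg hb
      simp [this]

lemma pm_comp_inj {e : S → T} (he : Function.Injective e) (g : Γ → S) (s : S) :
    pm P (fun γ => e (g γ)) (e s) = pm P g s := by
  unfold pm
  refine Finset.sum_congr rfl fun γ _ => ?_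
  simp [he.eq_iff]

lemma pm_comp_eq_zero {e : S → T} (g : Γ → S) {t : T} (ht : t ∉ Set.range e) :
    pm P (fun γ => e (g γ)) t = 0 := by
  unfold pm
  refine Finset.sum_eq_zero fun γ _ => ?_
  rw [if_neg]
  exact fun h => ht ⟨g γ, h⟩

lemma He_nonneg (hP0 : ∀ γ, 0 ≤ P γ) (hP1 : ∑ γ, P γ = 1) (g : Γ → S) : 0 ≤ He P g := by
  unfold He
  rw [neg_nonneg]
  refine Finset.sum_nonpos fun s _ => ?_
  have h0 := pm_nonneg hP0 g s
  have h1 : pm P g s ≤ 1 := by rw [← hP1]; exact pm_le_sum hP0 g s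
  exact mul_nonpos_of_nonneg_of_nonpos h0 (Real.log_nonpos h0 h1)

lemma He_comp_inj {e : S → T} (he : Function.Injective e) (g : Γ → S) :
    He P (fun γ => e (g γ)) = He P g := by
  unfold He
  congr 1
  rw [← Finset.sum_subset (Finset.subset_univ ((Finset.univ : Finset S).image e))]
  · rw [Finset.sum_image (fun a _ b _ h => he h)]
    refine Finset.sum_congr rfl fun s _ => ?_
    rw [pm_comp_inj he]
  · intro t _ ht
    have : t ∉ Set.range e := by
      intro ⟨s, hs⟩
      exact ht (Finset.mem_image.2 ⟨s, Finset.mem_univ s, hs⟩)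
    rw [pm_comp_eq_zero g this, zero_mul]

lemma He_const (hP1 : ∑ γ, P γ = 1) (c : S) : He P (fun _ => c) = 0 := by
  unfold He
  rw [neg_eq_zero]
  refine Finset.sum_eq_zero fun s _ => ?_
  by_cases h : c = s
  · have : pm P (fun _ => c) s = 1 := by
      unfold pm; simp [h, hP1]
    simp [this]
  · have : pm P (fun _ => c) s = 0 := by
      unfold pm; simp [h]
    simp [this]

/-- marginal: mass of a component of a pair -/
lemma pm_snd (x : Γ → S) (y : Γ → T) (t : T) :
    pm P y t = ∑ s, pm P (fun γ => (x γ, y γ)) (s, t) := by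
  unfold pm
  rw [Finset.sum_comm]
  refine Finset.sum_congr rfl fun γ _ => ?_
  by_cases h : y γ = t
  · rw [if_pos h, Finset.sum_eq_single (x γ)]
    · simp [h]
    · intro b _ hb
      rw [if_neg]
      simp [Ne.symm hb]
    · simp
  · rw [if_neg h, Finset.sum_eq_zero]
    intro b _
    rw [if_neg]
    simp [h]

lemma He_le_pair (hP0 : ∀ γ, 0 ≤ P γ) (x : Γ → S) (y : Γ → T) :
    He P y ≤ He P (fun γ => (x γ, y γ)) := by
  unfold He
  rw [neg_le_neg_iff]
  have hrw : ∀ t : T, pm P y t * Real.log (pm P y t)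
      = ∑ s, pm P (fun γ => (x γ, y γ)) (s, t) * Real.log (pm P y t) := by
    intro t
    rw [← Finset.sum_mul, ← pm_snd]
  calc ∑ p : S × T, pm P (fun γ => (x γ, y γ)) p * Real.log (pm P (fun γ => (x γ, y γ)) p)
      ≤ ∑ p : S × T, pm P (fun γ => (x γ, y γ)) p * Real.log (pm P y p.2) := by
        refine Finset.sum_le_sum fun p _ => ?_
        rcases eq_or_lt_of_le (pm_nonneg hP0 (fun γ => (x γ, y γ)) p) with h | h
        · rw [← h]; simp
        · refine mul_le_mul_of_nonneg_left ?_ (le_of_lt h)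
          refine Real.log_le_log h ?_
          rw [pm_snd x y p.2]
          exact Finset.single_le_sum (f := fun s => pm P (fun γ => (x γ, y γ)) (s, p.2))
            (fun s _ => pm_nonneg hP0 _ _) (Finset.mem_univ p.1)
    _ = ∑ t : T, pm P y t * Real.log (pm P y t) := by
        rw [Fintype.sum_prod_type_right]
        exact (Finset.sum_congr rfl fun t _ => (hrw t).symm)

variable {R : Type*} [Fintype R]

lemma pm_comp_ge (hP0 : ∀ γ, 0 ≤ P γ) (F : R → V) (t : Γ → R) (r : R) :
    pm P t r ≤ pm P (fun γ => F (t γ)) (F r) := by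
  rw [pm_comp F t (F r)]
  have h := Finset.single_le_sum (f := fun r' => if F r' = F r then pm P t r' else 0)
    (fun r' _ => by split <;> simp [pm_nonneg hP0]) (Finset.mem_univ r)
  simp only [if_pos] at h
  exact h

lemma sum_pull (F : R → V) (t : Γ → R) (φ : V → ℝ) :
    ∑ v, pm P (fun γ => F (t γ)) v * φ v = ∑ r, pm P t r * φ (F r) := by
  have : ∀ v : V, pm P (fun γ => F (t γ)) v * φ v
      = ∑ r, (if F r = v then pm P t r else 0) * φ v := by
    intro v; rw [pm_comp, Finset.sum_mul]
  rw [Finset.sum_congr rfl fun v _ => this v, Finset.sum_comm]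
  refine Finset.sum_congr rfl fun r _ => ?_
  rw [Finset.sum_eq_single (F r)]
  · simp
  · intro b _ hb
    rw [if_neg (fun h => hb h.symm), zero_mul]
  · simp

lemma He_SSA (hP0 : ∀ γ, 0 ≤ P γ) (hP1 : ∑ γ, P γ = 1)
    (x : Γ → S) (y : Γ → T) (z : Γ → U) :
    He P (fun γ => (x γ, (y γ, z γ))) + He P z
      ≤ He P (fun γ => (x γ, z γ)) + He P (fun γ => (y γ, z γ)) := by
  set t : Γ → S × T × U := fun γ => (x γ, (y γ, z γ)) with ht
  set f : S × T × U → ℝ := pm P t with hf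
  set a : S × U → ℝ := pm P (fun γ => (x γ, z γ)) with ha
  set b : T × U → ℝ := pm P (fun γ => (y γ, z γ)) with hb
  set c : U → ℝ := pm P z with hc
  have hfnn : ∀ r, 0 ≤ f r := fun r => pm_nonneg hP0 t r
  have hann : ∀ v, 0 ≤ a v := fun v => pm_nonneg hP0 _ v
  have hbnn : ∀ v, 0 ≤ b v := fun v => pm_nonneg hP0 _ v
  have hcnn : ∀ u, 0 ≤ c u := fun u => pm_nonneg hP0 _ u
  have hfa : ∀ r : S × T × U, f r ≤ a (r.1, r.2.2) :=
    fun r => pm_comp_ge hP0 (fun r => (r.1, r.2.2)) t r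
  have hfb : ∀ r : S × T × U, f r ≤ b (r.2.1, r.2.2) :=
    fun r => pm_comp_ge hP0 (fun r => (r.2.1, r.2.2)) t r
  have hfc : ∀ r : S × T × U, f r ≤ c r.2.2 :=
    fun r => pm_comp_ge hP0 (fun r => r.2.2) t r
  -- rewrite the four entropies as sums over triples
  have hHxz : He P (fun γ => (x γ, z γ)) = -∑ r, f r * Real.log (a (r.1, r.2.2)) := by
    unfold He
    rw [← sum_pull (fun r : S × T × U => (r.1, r.2.2)) t (fun v => Real.log (a v))]
  have hHyz : He P (fun γ => (y γ, z γ)) = -∑ r, f r * Real.log (b (r.2.1, r.2.2)) := by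
    unfold He
    rw [← sum_pull (fun r : S × T × U => (r.2.1, r.2.2)) t (fun v => Real.log (b v))]
  have hHz : He P z = -∑ r, f r * Real.log (c r.2.2) := by
    unfold He
    rw [← sum_pull (fun r : S × T × U => r.2.2) t (fun v => Real.log (c v))]
  have hHxyz : He P (fun γ => (x γ, (y γ, z γ))) = -∑ r, f r * Real.log (f r) := rfl
  rw [hHxz, hHyz, hHz, hHxyz]
  rw [← sub_nonneg]
  have key : ∀ r : S × T × U,
      f r - (if 0 < c r.2.2 then a (r.1, r.2.2) * b (r.2.1, r.2.2) / c r.2.2 else 0)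
      ≤ f r * Real.log (f r) + f r * Real.log (c r.2.2)
        - f r * Real.log (a (r.1, r.2.2)) - f r * Real.log (b (r.2.1, r.2.2)) := by
    intro r
    rcases eq_or_lt_of_le (hfnn r) with h0 | h0
    · rw [← h0]
      simp only [zero_mul, zero_sub, sub_zero, add_zero, zero_add, neg_zero, zero_sub]
      split
      · next hcpos =>
          have : 0 ≤ a (r.1, r.2.2) * b (r.2.1, r.2.2) / c r.2.2 :=
            div_nonneg (mul_nonneg (hann _) (hbnn _)) (le_of_lt hcpos)
          linarith
      · simp
    · have hapos : 0 < a (r.1, r.2.2) := lt_of_lt_of_le h0 (hfa r)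
      have hbpos : 0 < b (r.2.1, r.2.2) := lt_of_lt_of_le h0 (hfb r)
      have hcpos : 0 < c r.2.2 := lt_of_lt_of_le h0 (hfc r)
      rw [if_pos hcpos]
      have hratio : 0 < a (r.1, r.2.2) * b (r.2.1, r.2.2) / (f r * c r.2.2) :=
        div_pos (mul_pos hapos hbpos) (mul_pos h0 hcpos)
      have hlog := Real.log_le_sub_one_of_pos hratio
      have hlogeq : Real.log (a (r.1, r.2.2) * b (r.2.1, r.2.2) / (f r * c r.2.2))
          = Real.log (a (r.1, r.2.2)) + Real.log (b (r.2.1, r.2.2))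
            - Real.log (f r) - Real.log (c r.2.2) := by
        rw [Real.log_div (by positivity) (by positivity), Real.log_mul (ne_of_gt hapos)
          (ne_of_gt hbpos), Real.log_mul (ne_of_gt h0) (ne_of_gt hcpos)]
        ring
      have := mul_le_mul_of_nonneg_left hlog (le_of_lt h0)
      rw [hlogeq] at this
      have hfrac : f r * (a (r.1, r.2.2) * b (r.2.1, r.2.2) / (f r * c r.2.2) - 1)
          = a (r.1, r.2.2) * b (r.2.1, r.2.2) / c r.2.2 - f r := by
        field_simp
      nlinarith [this]
  have hsum := Finset.sum_le_sum (fun r (_ : r ∈ Finset.univ) => key r)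
  have hsumf : ∑ r, f r = 1 := by rw [hf, sum_pm, hP1]
  -- the correction sum is at most 1
  have hcorr : ∑ r : S × T × U,
      (if 0 < c r.2.2 then a (r.1, r.2.2) * b (r.2.1, r.2.2) / c r.2.2 else 0) ≤ 1 := by
    have hrw : ∑ r : S × T × U,
        (if 0 < c r.2.2 then a (r.1, r.2.2) * b (r.2.1, r.2.2) / c r.2.2 else 0)
        = ∑ u : U, ∑ s : S, ∑ tt : T,
            (if 0 < c u then a (s, u) * b (tt, u) / c u else 0) := by
      calc ∑ r : S × T × U,
          (if 0 < c r.2.2 then a (r.1, r.2.2) * b (r.2.1, r.2.2) / c r.2.2 else 0)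
          = ∑ s : S, ∑ p : T × U,
              (if 0 < c p.2 then a (s, p.2) * b (p.1, p.2) / c p.2 else 0) :=
            Fintype.sum_prod_type _
        _ = ∑ s : S, ∑ tt : T, ∑ u : U,
              (if 0 < c u then a (s, u) * b (tt, u) / c u else 0) :=
            Finset.sum_congr rfl fun s _ => Fintype.sum_prod_type _
        _ = ∑ s : S, ∑ u : U, ∑ tt : T,
              (if 0 < c u then a (s, u) * b (tt, u) / c u else 0) :=
            Finset.sum_congr rfl fun s _ => Finset.sum_comm
        _ = ∑ u : U, ∑ s : S, ∑ tt : T,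
              (if 0 < c u then a (s, u) * b (tt, u) / c u else 0) :=
            Finset.sum_comm
    rw [hrw]
    have hmarg1 : ∀ u : U, (∑ s : S, a (s, u)) = c u := by
      intro u; rw [ha, hc]; exact (pm_snd x z u).symm
    have hmarg2 : ∀ u : U, (∑ tt : T, b (tt, u)) = c u := by
      intro u; rw [hb, hc]; exact (pm_snd y z u).symm
    have hsu : ∀ u : U, ∑ s : S, ∑ tt : T,
        (if 0 < c u then a (s, u) * b (tt, u) / c u else 0) ≤ c u := by
      intro u
      by_cases hcu : 0 < c u
      · have heq : ∑ s : S, ∑ tt : T, (if 0 < c u then a (s, u) * b (tt, u) / c u else 0)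
            = (∑ s : S, a (s, u)) * (∑ tt : T, b (tt, u)) / c u := by
          calc ∑ s : S, ∑ tt : T, (if 0 < c u then a (s, u) * b (tt, u) / c u else 0)
              = ∑ s : S, (a (s, u) * (∑ tt : T, b (tt, u)) / c u) := by
                refine Finset.sum_congr rfl fun s _ => ?_
                rw [Finset.sum_congr rfl fun tt (_ : tt ∈ Finset.univ) => if_pos hcu,
                  ← Finset.sum_div, ← Finset.mul_sum]
            _ = (∑ s : S, a (s, u)) * (∑ tt : T, b (tt, u)) / c u := by
                rw [← Finset.sum_div, ← Finset.sum_mul]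
        rw [heq, hmarg1 u, hmarg2 u, div_le_iff₀ hcu]
      · simp only [if_neg hcu]
        simp [hcnn u]
    calc ∑ u : U, ∑ s : S, ∑ tt : T, (if 0 < c u then a (s, u) * b (tt, u) / c u else 0)
        ≤ ∑ u, c u := Finset.sum_le_sum fun u _ => hsu u
      _ = 1 := by rw [hc, sum_pm, hP1]
  have hsplit : ∑ r : S × T × U,
      (f r - (if 0 < c r.2.2 then a (r.1, r.2.2) * b (r.2.1, r.2.2) / c r.2.2 else 0))
      = (∑ r, f r) - ∑ r : S × T × U,
          (if 0 < c r.2.2 then a (r.1, r.2.2) * b (r.2.1, r.2.2) / c r.2.2 else 0) :=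
    Finset.sum_sub_distrib _ _
  have hexp : ∑ r : S × T × U, (f r * Real.log (f r) + f r * Real.log (c r.2.2)
      - f r * Real.log (a (r.1, r.2.2)) - f r * Real.log (b (r.2.1, r.2.2)))
      = (∑ r, f r * Real.log (f r)) + (∑ r, f r * Real.log (c r.2.2))
        - (∑ r, f r * Real.log (a (r.1, r.2.2)))
        - (∑ r, f r * Real.log (b (r.2.1, r.2.2))) := by
    rw [Finset.sum_sub_distrib, Finset.sum_sub_distrib, Finset.sum_add_distrib]
  rw [hsplit, hsumf, hexp] at hsum
  linarith

lemma He_subadd (hP0 : ∀ γ, 0 ≤ P γ) (hP1 : ∑ γ, P γ = 1) (x : Γ → S) (y : Γ → T) :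
    He P (fun γ => (x γ, y γ)) ≤ He P x + He P y := by
  have h := He_SSA hP0 hP1 x y (fun _ => ())
  have h1 : He P (fun _ : Γ => ()) = 0 := He_const hP1 ()
  have h2 : He P (fun γ => (x γ, ())) = He P x :=
    He_comp_inj (e := fun s : S => (s, ())) (fun a b h => (Prod.ext_iff.1 h).1) x
  have h3 : He P (fun γ => (y γ, ())) = He P y :=
    He_comp_inj (e := fun s : T => (s, ())) (fun a b h => (Prod.ext_iff.1 h).1) y
  have h4 : He P (fun γ => (x γ, (y γ, ()))) = He P (fun γ => (x γ, y γ)) :=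
    He_comp_inj (e := fun p : S × T => (p.1, (p.2, ())))
      (fun a b h => by
        have h1 := (Prod.ext_iff.1 h).1
        have h2 := (Prod.ext_iff.1 (Prod.ext_iff.1 h).2).1
        exact Prod.ext h1 h2) (fun γ => (x γ, y γ))
  rw [h1, h2, h3, h4] at h
  linarith

lemma He_indep (hP1 : ∑ γ, P γ = 1) {x : Γ → S} {y : Γ → T}
    (hfac : ∀ s t, pm P (fun γ => (x γ, y γ)) (s, t) = pm P x s * pm P y t) :
    He P (fun γ => (x γ, y γ)) = He P x + He P y := by
  have key : ∀ p q : ℝ, (p * q) * Real.log (p * q)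
      = (p * Real.log p) * q + p * (q * Real.log q) := by
    intro p q
    rcases eq_or_ne p 0 with hp | hp
    · simp [hp]
    rcases eq_or_ne q 0 with hq | hq
    · simp [hq]
    rw [Real.log_mul hp hq]
    ring
  unfold He
  rw [Fintype.sum_prod_type]
  have hs : ∀ s : S, ∑ t : T, pm P (fun γ => (x γ, y γ)) (s, t)
      * Real.log (pm P (fun γ => (x γ, y γ)) (s, t))
      = (pm P x s * Real.log (pm P x s)) * (∑ t, pm P y t)
        + pm P x s * (∑ t, pm P y t * Real.log (pm P y t)) := by
    intro s
    rw [Finset.mul_sum, Finset.mul_sum, ← Finset.sum_add_distrib]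
    refine Finset.sum_congr rfl fun t _ => ?_
    rw [hfac s t, key]
  rw [Finset.sum_congr rfl fun s _ => hs s]
  rw [Finset.sum_add_distrib, ← Finset.sum_mul, ← Finset.sum_mul, sum_pm, sum_pm, hP1]
  ring

lemma He_comp_inj' (e : S → T) (he : Function.Injective e) (g : Γ → S) {h : Γ → T}
    (hh : ∀ γ, h γ = e (g γ)) : He P h = He P g := by
  have : h = fun γ => e (g γ) := funext hh
  rw [this]
  exact He_comp_inj he g

omit [Fintype Γ] in
lemma prod_inj_aux {f : T → S} : Function.Injective (fun t : T => (f t, t)) :=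
  fun a b h => congrArg Prod.snd h

omit [Fintype Γ] in
lemma injE {f : S → T} : Function.Injective (fun s : S => (s, f s)) :=
  fun a b h => congrArg Prod.fst h

omit [Fintype Γ] in
lemma injA {f : T → U} : Function.Injective (fun p : S × T => (p.1, (p.2, f p.2))) := by
  intro a b h
  simp only [Prod.mk.injEq] at h
  exact Prod.ext h.1 h.2.1

omit [Fintype Γ] in
lemma injB {f : S → U} : Function.Injective (fun p : S × T => (p.1, (p.2, f p.1))) := by
  intro a b h
  simp only [Prod.mk.injEq] at h
  exact Prod.ext h.1 h.2.1

omit [Fintype Γ] in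
lemma injC {f : S → U} : Function.Injective (fun p : S × T => (p.1, (f p.1, p.2))) := by
  intro a b h
  simp only [Prod.mk.injEq] at h
  exact Prod.ext h.1 h.2.2

omit [Fintype Γ] in
lemma injG : Function.Injective (fun p : S × (T × U) => ((p.1, p.2.1), p.2.2)) := by
  intro a b h
  simp only [Prod.mk.injEq] at h
  exact Prod.ext h.1.1 (Prod.ext h.1.2 h.2)

lemma Hc_nonneg (hP0 : ∀ γ, 0 ≤ P γ) (x : Γ → S) (z : Γ → T) : 0 ≤ Hc P x z := by
  unfold Hc
  have := He_le_pair hP0 x z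
  linarith

lemma Hc_le_He (hP0 : ∀ γ, 0 ≤ P γ) (hP1 : ∑ γ, P γ = 1) (x : Γ → S) (z : Γ → T) :
    Hc P x z ≤ He P x := by
  unfold Hc
  have := He_subadd hP0 hP1 x z
  linarith

lemma He_pair_assoc (x : Γ → S) (y : Γ → T) (z : Γ → U) :
    He P (fun γ => ((x γ, y γ), z γ)) = He P (fun γ => (x γ, (y γ, z γ))) :=
  He_comp_inj' (fun p : S × (T × U) => ((p.1, p.2.1), p.2.2)) injG
    (fun γ => (x γ, (y γ, z γ))) (fun γ => rfl)

lemma Hc_chain (x : Γ → S) (y : Γ → T) (z : Γ → U) :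
    Hc P (fun γ => (x γ, y γ)) z = Hc P y z + Hc P x (fun γ => (y γ, z γ)) := by
  unfold Hc
  rw [He_pair_assoc]
  ring

lemma Hc_mono_right (hP0 : ∀ γ, 0 ≤ P γ) (hP1 : ∑ γ, P γ = 1)
    (x : Γ → S) (z : Γ → T) {u : Γ → U} (f : T → U)
    (hu : ∀ γ, u γ = f (z γ)) : Hc P x z ≤ Hc P x u := by
  have h := He_SSA hP0 hP1 x z u
  have h1 : He P (fun γ => (z γ, u γ)) = He P z :=
    He_comp_inj' (fun t : T => (t, f t)) injE z (fun γ => by simp [hu γ])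
  have h2 : He P (fun γ => (x γ, (z γ, u γ))) = He P (fun γ => (x γ, z γ)) :=
    He_comp_inj' (fun p : S × T => (p.1, (p.2, f p.2))) injA
      (fun γ => (x γ, z γ)) (fun γ => by simp [hu γ])
  rw [h1, h2] at h
  unfold Hc
  linarith

lemma Hc_mono_left (hP0 : ∀ γ, 0 ≤ P γ) {x : Γ → S} {x' : Γ → U} (z : Γ → T) (f : U → S)
    (hx : ∀ γ, x γ = f (x' γ)) : Hc P x z ≤ Hc P x' z := by
  have h2 : He P (fun γ => (x' γ, (x γ, z γ))) = He P (fun γ => (x' γ, z γ)) :=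
    He_comp_inj' (fun p : U × T => (p.1, (f p.1, p.2))) injC
      (fun γ => (x' γ, z γ)) (fun γ => by simp [hx γ])
  have h := He_le_pair hP0 x' (fun γ => (x γ, z γ))
  unfold Hc
  linarith

lemma Hc_zero_of_comp (x : Γ → S) (z : Γ → T) (f : T → S)
    (hx : ∀ γ, x γ = f (z γ)) : Hc P x z = 0 := by
  unfold Hc
  have : He P (fun γ => (x γ, z γ)) = He P z :=
    He_comp_inj' (fun t : T => (f t, t)) prod_inj_aux z (fun γ => by simp [hx γ])
  rw [this]
  ring

lemma He_congr {x : Γ → S} {y : Γ → T} (f : T → S) (g : S → T)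
    (hxy : ∀ γ, x γ = f (y γ)) (hyx : ∀ γ, y γ = g (x γ)) : He P x = He P y := by
  have h1 : He P (fun γ => (x γ, y γ)) = He P y :=
    He_comp_inj' (fun t : T => (f t, t)) prod_inj_aux y (fun γ => by simp [hxy γ])
  have h2 : He P (fun γ => (x γ, y γ)) = He P x :=
    He_comp_inj' (fun s : S => (s, g s)) injE x (fun γ => by simp [hyx γ])
  rw [← h1, h2]

lemma Hc_congr_right (x : Γ → S) {z : Γ → T} {z' : Γ → U} (f : U → T) (g : T → U)
    (hz : ∀ γ, z γ = f (z' γ)) (hz' : ∀ γ, z' γ = g (z γ)) : Hc P x z = Hc P x z' := by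
  unfold Hc
  have h1 : He P z = He P z' := He_congr f g hz hz'
  have h2 : He P (fun γ => (x γ, z γ)) = He P (fun γ => (x γ, z' γ)) :=
    He_congr (fun p : S × U => (p.1, f p.2)) (fun p : S × T => (p.1, g p.2))
      (fun γ => by simp [hz γ]) (fun γ => by simp [hz' γ])
  rw [h1, h2]

lemma Hc_congr_left {x : Γ → S} {x' : Γ → U} (z : Γ → T) (f : U → S) (g : S → U)
    (hx : ∀ γ, x γ = f (x' γ)) (hx' : ∀ γ, x' γ = g (x γ)) : Hc P x z = Hc P x' z := by
  unfold Hc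
  have h2 : He P (fun γ => (x γ, z γ)) = He P (fun γ => (x' γ, z γ)) :=
    He_congr (fun p : U × T => (f p.1, p.2)) (fun p : S × T => (g p.1, p.2))
      (fun γ => by simp [hx γ]) (fun γ => by simp [hx' γ])
  rw [h2]

lemma Hc_pair_subadd (hP0 : ∀ γ, 0 ≤ P γ) (hP1 : ∑ γ, P γ = 1)
    (x : Γ → S) (y : Γ → T) (z : Γ → U) :
    Hc P (fun γ => (x γ, y γ)) z ≤ Hc P x z + Hc P y z := by
  rw [Hc_chain]
  have := Hc_mono_right hP0 hP1 x (fun γ => (y γ, z γ)) (u := z) Prod.snd (fun γ => rfl)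
  linarith

lemma Hc_tuple_subadd (hP0 : ∀ γ, 0 ≤ P γ) (hP1 : ∑ γ, P γ = 1)
    (F : Finset ℕ) (xf : ℕ → Γ → S) (z : Γ → T) :
    Hc P (fun γ => (fun i : ↥F => xf i.1 γ)) z ≤ ∑ i ∈ F, Hc P (xf i) z := by
  classical
  induction F using Finset.cons_induction with
  | empty =>
      have hconst : (fun γ => (fun i : ↥(∅ : Finset ℕ) => xf i.1 γ))
          = fun _ : Γ => (fun i : ↥(∅ : Finset ℕ) =>
              (False.elim (Finset.notMem_empty i.1 i.2) : S)) := by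
        funext γ i
        exact False.elim (Finset.notMem_empty i.1 i.2)
      rw [hconst, Finset.sum_empty]
      have := Hc_zero_of_comp (P := P)
        (fun _ : Γ => (fun i : ↥(∅ : Finset ℕ) =>
          (False.elim (Finset.notMem_empty i.1 i.2) : S)))
        z (fun _ => (fun i : ↥(∅ : Finset ℕ) =>
          (False.elim (Finset.notMem_empty i.1 i.2) : S)))
        (fun γ => rfl)
      rw [this]
  | cons a F ha ih =>
      have key : Hc P (fun γ => (fun i : ↥(Finset.cons a F ha) => xf i.1 γ)) z
          = Hc P (fun γ => (xf a γ, fun i : ↥F => xf i.1 γ)) z := by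
        refine Hc_congr_left z
          (fun p : S × (↥F → S) => fun i : ↥(Finset.cons a F ha) =>
            if h : i.1 = a then p.1 else p.2 ⟨i.1, by
              rcases Finset.mem_cons.1 i.2 with h' | h'
              · exact absurd h' h
              · exact h'⟩)
          (fun v : (↥(Finset.cons a F ha) → S) =>
            (v ⟨a, Finset.mem_cons_self a F⟩,
             fun i : ↥F => v ⟨i.1, Finset.mem_cons.2 (Or.inr i.2)⟩)) ?_ ?_
        · intro γ
          funext i
          by_cases h : i.1 = a
          · simp only [dif_pos h]
            rw [h]
          · simp only [dif_neg h]
        · intro γ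
          rfl
      rw [key, Finset.sum_cons]
      calc Hc P (fun γ => (xf a γ, fun i : ↥F => xf i.1 γ)) z
          ≤ Hc P (xf a) z + Hc P (fun γ => (fun i : ↥F => xf i.1 γ)) z :=
            Hc_pair_subadd hP0 hP1 _ _ _
        _ ≤ Hc P (xf a) z + ∑ i ∈ F, Hc P (xf i) z := by linarith [ih]

lemma He_pair_add_of_comp (hP0 : ∀ γ, 0 ≤ P γ) (hP1 : ∑ γ, P γ = 1)
    {x : Γ → S} {q : Γ → T} {y : Γ → U}
    (hxq : He P (fun γ => (x γ, q γ)) = He P x + He P q)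
    (f : S → U) (hy : ∀ γ, y γ = f (x γ)) :
    He P (fun γ => (y γ, q γ)) = He P y + He P q := by
  have hle := He_subadd hP0 hP1 y q
  have h := He_SSA hP0 hP1 x q y
  have h1 : He P (fun γ => (x γ, y γ)) = He P x :=
    He_comp_inj' (fun s : S => (s, f s)) injE x (fun γ => by simp [hy γ])
  have h2 : He P (fun γ => (x γ, (q γ, y γ))) = He P (fun γ => (x γ, q γ)) :=
    He_comp_inj' (fun p : S × T => (p.1, (p.2, f p.1))) injB
      (fun γ => (x γ, q γ)) (fun γ => by simp [hy γ])
  have h3 : He P (fun γ => (q γ, y γ)) = He P (fun γ => (y γ, q γ)) :=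
    He_congr (fun p : U × T => (p.2, p.1)) (fun p : T × U => (p.2, p.1))
      (fun γ => rfl) (fun γ => rfl)
  rw [h1, h2, h3, hxq] at h
  linarith

section Bridge

open MeasureTheory

variable {Ω : Type*} [MeasurableSpace Ω] (μ : Measure Ω) [IsProbabilityMeasure μ]
variable (G : Ω → Γ)

noncomputable def PofG : Γ → ℝ := fun γ => (μ (G ⁻¹' {γ})).toReal

lemma PofG_nonneg : ∀ γ, 0 ≤ PofG μ G γ := fun γ => ENNReal.toReal_nonneg

lemma bridge_pm (hGfib : ∀ γ : Γ, MeasurableSet (G ⁻¹' {γ}))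
    (g : Γ → S) (s : S) :
    (μ ((fun ω => g (G ω)) ⁻¹' {s})).toReal = pm (PofG μ G) g s := by
  classical
  have hset : (fun ω => g (G ω)) ⁻¹' {s}
      = ⋃ γ ∈ Finset.univ.filter (fun γ => g γ = s), G ⁻¹' {γ} := by
    ext ω
    simp only [Set.mem_preimage, Set.mem_singleton_iff, Set.mem_iUnion,
      Finset.mem_filter, Finset.mem_univ, true_and]
    constructor
    · intro h
      exact ⟨G ω, h, rfl⟩
    · rintro ⟨γ, hγ, hω⟩
      rw [hω]; exact hγ
  rw [hset, measure_biUnion_finset ?hdisj (fun γ _ => hGfib γ)]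
  case hdisj =>
    intro γ1 _ γ2 _ hne
    refine Set.disjoint_left.2 fun ω h1 h2 => hne ?_
    have e1 : G ω = γ1 := h1
    have e2 : G ω = γ2 := h2
    rw [← e1, e2]
  rw [ENNReal.toReal_sum (fun γ _ => measure_ne_top μ _)]
  rw [Finset.sum_filter]
  unfold pm PofG
  refine Finset.sum_congr rfl fun γ _ => ?_
  by_cases h : g γ = s <;> simp [h]

lemma bridge_sum_one (hGfib : ∀ γ : Γ, MeasurableSet (G ⁻¹' {γ})) :
    ∑ γ, PofG μ G γ = 1 := by
  have h := bridge_pm μ G hGfib (fun _ => ()) ()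
  have h2 : ((fun ω => ((fun _ : Γ => ()) (G ω))) ⁻¹' {()}) = Set.univ := by
    ext ω; simp
  rw [h2] at h
  simp only [measure_univ, ENNReal.toReal_one] at h
  rw [h]
  unfold pm
  simp

lemma bridge_entropy [Fintype S] (hGfib : ∀ γ : Γ, MeasurableSet (G ⁻¹' {γ}))
    (g : Γ → S) (X : Ω → S) (hX : ∀ ω, X ω = g (G ω)) :
    entropy μ X = He (PofG μ G) g := by
  have hXg : X = fun ω => g (G ω) := funext hX
  subst hXg
  unfold entropy He
  congr 1
  refine Finset.sum_congr rfl fun s _ => ?_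
  rw [bridge_pm μ G hGfib g s]

lemma bridge_condEntropy [Fintype S] [Fintype T]
    (hGfib : ∀ γ : Γ, MeasurableSet (G ⁻¹' {γ}))
    (g : Γ → S) (h : Γ → T) (X : Ω → S) (Y : Ω → T)
    (hX : ∀ ω, X ω = g (G ω)) (hY : ∀ ω, Y ω = h (G ω)) :
    condEntropy μ X Y = Hc (PofG μ G) g h := by
  unfold condEntropy Hc
  rw [bridge_entropy μ G hGfib h Y hY,
    bridge_entropy μ G hGfib (fun γ => (g γ, h γ)) (fun ω => (X ω, Y ω))
      (fun ω => by rw [hX ω, hY ω])]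

end Bridge

section Main

variable {σ β α : Type*} [Fintype σ] [Fintype β] [Fintype α]

lemma main_aux (P : Γ → ℝ) (hP0 : ∀ γ, 0 ≤ P γ) (hP1 : ∑ γ, P γ = 1)
    (M : ℕ) (hM : 2 ≤ M) (L : ℝ) (hL : 0 ≤ L)
    (w : ℕ → Γ → σ) (q : Γ → β) (a : ℕ → ℕ → Γ → α)
    (HW : ∀ k ∈ Finset.Icc 1 M, ∀ S : Finset ℕ, S ⊆ Finset.Icc 1 M → k ∉ S →
      Hc P (w k) (fun γ => ((fun ℓ : ↥S => w ℓ.1 γ), q γ)) = L)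
    (HWq : ∀ k ∈ Finset.Icc 1 M, Hc P (w k) q = L)
    (Hdet1 : ∀ k ∈ Finset.Icc 1 M, Hc P (a 1 k) (fun γ => (w 1 γ, q γ)) = 0)
    (HdetN : ∀ k ∈ Finset.Icc 1 M, Hc P (a (M+1) k) (fun γ => (w M γ, q γ)) = 0)
    (Hdet : ∀ k ∈ Finset.Icc 1 M, ∀ n, 2 ≤ n → n ≤ M →
      Hc P (a n k) (fun γ => (w (n-1) γ, (w n γ, q γ))) = 0)
    (Hdec : ∀ k ∈ Finset.Icc 1 M,
      Hc P (w k) (fun γ => ((fun n : ↥(Finset.Icc 1 (M+1)) => a n.1 k γ), q γ)) = 0)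
    (Hpriv : ∀ n, 2 ≤ n → n ≤ M → ∀ S : Finset ℕ, S ⊆ Finset.Icc 1 M →
      Hc P (a n n) (fun γ => ((fun ℓ : ↥S => w ℓ.1 γ), q γ))
        = Hc P (a n (n-1)) (fun γ => ((fun ℓ : ↥S => w ℓ.1 γ), q γ))) :
    (2 * (M:ℝ) - 2) * L ≤ ∑ k ∈ Finset.Icc 1 M, ∑ n ∈ Finset.Icc 1 (M+1), He P (a n k) := by
  classical
  -- determinism under any conditioning tuple containing the relevant messages
  have hdetC : ∀ k ∈ Finset.Icc 1 M, ∀ E : Finset ℕ, ∀ n ∈ Finset.Icc 1 (M+1),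
      (n = 1 → 1 ∈ E) → (2 ≤ n → n ≤ M → (n-1 ∈ E ∧ n ∈ E)) → (n = M+1 → M ∈ E) →
      Hc P (a n k) (fun γ => ((fun ℓ : ↥E => w ℓ.1 γ), q γ)) = 0 := by
    intro k hk E n hn h1 h2 h3
    refine le_antisymm ?_ (Hc_nonneg hP0 _ _)
    have hn' := Finset.mem_Icc.1 hn
    rcases Nat.lt_or_ge n 2 with hcase | hcase
    · -- n = 1
      have hn1 : n = 1 := by omega
      subst hn1
      have hmem : (1:ℕ) ∈ E := h1 rfl
      have hle : Hc P (a 1 k) (fun γ => ((fun ℓ : ↥E => w ℓ.1 γ), q γ))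
          ≤ Hc P (a 1 k) (fun γ => (w 1 γ, q γ)) :=
        Hc_mono_right hP0 hP1 _ _
          (fun p : (↥E → σ) × β => (p.1 ⟨1, hmem⟩, p.2)) (fun γ => rfl)
      rw [Hdet1 k hk] at hle
      exact hle
    rcases Nat.lt_or_ge n (M+1) with hcase2 | hcase2
    · -- 2 ≤ n ≤ M
      obtain ⟨hm1, hm2⟩ := h2 hcase (by omega)
      have hle : Hc P (a n k) (fun γ => ((fun ℓ : ↥E => w ℓ.1 γ), q γ))
          ≤ Hc P (a n k) (fun γ => (w (n-1) γ, (w n γ, q γ))) :=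
        Hc_mono_right hP0 hP1 _ _
          (fun p : (↥E → σ) × β => (p.1 ⟨n-1, hm1⟩, (p.1 ⟨n, hm2⟩, p.2))) (fun γ => rfl)
      rw [Hdet k hk n hcase (by omega)] at hle
      exact hle
    · -- n = M+1
      have hnM : n = M+1 := by omega
      subst hnM
      have hmem : M ∈ E := h3 rfl
      have hle : Hc P (a (M+1) k) (fun γ => ((fun ℓ : ↥E => w ℓ.1 γ), q γ))
          ≤ Hc P (a (M+1) k) (fun γ => (w M γ, q γ)) :=
        Hc_mono_right hP0 hP1 _ _
          (fun p : (↥E → σ) × β => (p.1 ⟨M, hmem⟩, p.2)) (fun γ => rfl)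
      rw [HdetN k hk] at hle
      exact hle
  -- Forward decoding inequality
  have FK : ∀ k, 1 ≤ k → k ≤ M →
      L + Hc P (a k k) (fun γ => ((fun ℓ : ↥(Finset.Icc k M) => w ℓ.1 γ), q γ))
      ≤ (∑ n ∈ Finset.Icc 1 (k-1), He P (a n k))
        + Hc P (a (k+1) k) (fun γ => ((fun ℓ : ↥(Finset.Icc (k+1) M) => w ℓ.1 γ), q γ))
        + Hc P (a k k) (fun γ => ((fun ℓ : ↥(Finset.Icc (k+1) M) => w ℓ.1 γ), q γ)) := by
    intro k hk1 hkM
    have hk : k ∈ Finset.Icc 1 M := Finset.mem_Icc.2 ⟨hk1, hkM⟩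
    set C : Γ → (↥(Finset.Icc (k+1) M) → σ) × β :=
      fun γ => ((fun ℓ : ↥(Finset.Icc (k+1) M) => w ℓ.1 γ), q γ) with hC
    set Y : Γ → (↥(Finset.Icc 1 (k+1)) → α) :=
      fun γ => (fun i : ↥(Finset.Icc 1 (k+1)) => a i.1 k γ) with hY
    set Z : Γ → (↥(Finset.Icc (k+2) (M+1)) → α) :=
      fun γ => (fun i : ↥(Finset.Icc (k+2) (M+1)) => a i.1 k γ) with hZ
    -- step 0 : answers outside are determined by C
    have step0 : Hc P Z C ≤ 0 := by
      calc Hc P Z C ≤ ∑ n ∈ Finset.Icc (k+2) (M+1), Hc P (a n k) C :=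
            Hc_tuple_subadd hP0 hP1 _ (fun n => a n k) C
        _ = 0 := by
            refine Finset.sum_eq_zero fun n hn => ?_
            have hn' := Finset.mem_Icc.1 hn
            exact hdetC k hk (Finset.Icc (k+1) M) n
              (Finset.mem_Icc.2 ⟨by omega, by omega⟩)
              (fun h => by omega)
              (fun h2 h3 => ⟨Finset.mem_Icc.2 ⟨by omega, by omega⟩,
                Finset.mem_Icc.2 ⟨by omega, by omega⟩⟩)
              (fun h => Finset.mem_Icc.2 ⟨by omega, by omega⟩)
    -- step 1 : decodability extension
    have step1 : Hc P (w k) (fun γ => (Y γ, C γ)) = 0 := by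
      refine le_antisymm ?_ (Hc_nonneg hP0 _ _)
      have hm1 : Hc P (w k) (fun γ => (Y γ, C γ))
          ≤ Hc P (fun γ => (w k γ, Z γ)) (fun γ => (Y γ, C γ)) :=
        Hc_mono_left hP0 _ Prod.fst (fun γ => rfl)
      have hch : Hc P (fun γ => (w k γ, Z γ)) (fun γ => (Y γ, C γ))
          = Hc P Z (fun γ => (Y γ, C γ))
            + Hc P (w k) (fun γ => (Z γ, (Y γ, C γ))) :=
        Hc_chain (w k) Z (fun γ => (Y γ, C γ))
      have hZ1 : Hc P Z (fun γ => (Y γ, C γ)) ≤ Hc P Z C :=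
        Hc_mono_right hP0 hP1 _ _ Prod.snd (fun γ => rfl)
      have hW1 : Hc P (w k) (fun γ => (Z γ, (Y γ, C γ)))
          ≤ Hc P (w k) (fun γ => ((fun n : ↥(Finset.Icc 1 (M+1)) => a n.1 k γ), q γ)) := by
        refine Hc_mono_right hP0 hP1 _ _
          (fun p : (↥(Finset.Icc (k+2) (M+1)) → α)
              × ((↥(Finset.Icc 1 (k+1)) → α) × ((↥(Finset.Icc (k+1) M) → σ) × β)) =>
            ((fun n : ↥(Finset.Icc 1 (M+1)) =>
              if h : n.1 ∈ Finset.Icc 1 (k+1) then p.2.1 ⟨n.1, h⟩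
              else p.1 ⟨n.1, by
                have h1 := Finset.mem_Icc.1 n.2
                simp only [Finset.mem_Icc] at h ⊢
                omega⟩), p.2.2.2)) ?_
        intro γ
        dsimp only
        refine congrArg₂ Prod.mk ?_ rfl
        funext n
        by_cases h : n.1 ∈ Finset.Icc 1 (k+1)
        · rw [dif_pos h]
        · rw [dif_neg h]
      rw [Hdec k hk] at hW1
      linarith
    -- step 2 : lower bound
    have step2 : L + Hc P (a k k) (fun γ => ((fun ℓ : ↥(Finset.Icc k M) => w ℓ.1 γ), q γ))
        ≤ Hc P Y C := by
      have hchainA : Hc P (fun γ => (w k γ, Y γ)) C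
          = Hc P Y C + Hc P (w k) (fun γ => (Y γ, C γ)) := Hc_chain (w k) Y C
      have hswap : Hc P (fun γ => (w k γ, Y γ)) C = Hc P (fun γ => (Y γ, w k γ)) C :=
        Hc_congr_left C (fun p : (↥(Finset.Icc 1 (k+1)) → α) × σ => (p.2, p.1))
          (fun p : σ × (↥(Finset.Icc 1 (k+1)) → α) => (p.2, p.1))
          (fun γ => rfl) (fun γ => rfl)
      have hchainB : Hc P (fun γ => (Y γ, w k γ)) C
          = Hc P (w k) C + Hc P Y (fun γ => (w k γ, C γ)) := Hc_chain Y (w k) C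
      have hHwkC : Hc P (w k) C = L := by
        refine HW k hk (Finset.Icc (k+1) M) ?_ ?_
        · intro x hx
          have := Finset.mem_Icc.1 hx
          exact Finset.mem_Icc.2 ⟨by omega, by omega⟩
        · simp only [Finset.mem_Icc]
          omega
      have hmono : Hc P (a k k) (fun γ => (w k γ, C γ))
          ≤ Hc P Y (fun γ => (w k γ, C γ)) :=
        Hc_mono_left hP0 _
          (fun v : (↥(Finset.Icc 1 (k+1)) → α) =>
            v ⟨k, Finset.mem_Icc.2 ⟨by omega, by omega⟩⟩) (fun γ => rfl)
      have hcongr : Hc P (a k k) (fun γ => (w k γ, C γ))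
          = Hc P (a k k) (fun γ => ((fun ℓ : ↥(Finset.Icc k M) => w ℓ.1 γ), q γ)) := by
        refine Hc_congr_right (a k k)
          (f := fun p : (↥(Finset.Icc k M) → σ) × β =>
            (p.1 ⟨k, Finset.mem_Icc.2 ⟨le_refl k, hkM⟩⟩,
             ((fun ℓ : ↥(Finset.Icc (k+1) M) => p.1 ⟨ℓ.1, by
                have := Finset.mem_Icc.1 ℓ.2
                exact Finset.mem_Icc.2 ⟨by omega, by omega⟩⟩), p.2)))
          (g := fun p : σ × ((↥(Finset.Icc (k+1) M) → σ) × β) =>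
            ((fun ℓ : ↥(Finset.Icc k M) =>
              if h : ℓ.1 = k then p.1 else p.2.1 ⟨ℓ.1, by
                have := Finset.mem_Icc.1 ℓ.2
                simp only [Finset.mem_Icc]
                omega⟩), p.2.2)) ?_ ?_
        · intro γ
          rfl
        · intro γ
          dsimp only
          refine congrArg₂ Prod.mk ?_ rfl
          funext ℓ
          by_cases h : ℓ.1 = k
          · rw [dif_pos h, h]
          · rw [dif_neg h]
      rw [step1, add_zero] at hchainA
      rw [← hchainA, hswap, hchainB, hHwkC, ← hcongr]
      linarith
    -- step 3 : upper bound
    have step3 : Hc P Y C ≤ (∑ n ∈ Finset.Icc 1 (k-1), He P (a n k))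
        + Hc P (a k k) C + Hc P (a (k+1) k) C := by
      have hYsplit : Hc P Y C = Hc P (fun γ =>
          ((fun i : ↥(Finset.Icc 1 (k-1)) => a i.1 k γ), (a k k γ, a (k+1) k γ))) C := by
        refine Hc_congr_left C
          (f := fun p : (↥(Finset.Icc 1 (k-1)) → α) × (α × α) =>
            (fun i : ↥(Finset.Icc 1 (k+1)) =>
              if h : i.1 ∈ Finset.Icc 1 (k-1) then p.1 ⟨i.1, h⟩
              else if h2 : i.1 = k then p.2.1 else p.2.2))
          (g := fun v : (↥(Finset.Icc 1 (k+1)) → α) =>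
            ((fun i : ↥(Finset.Icc 1 (k-1)) => v ⟨i.1, by
                have := Finset.mem_Icc.1 i.2
                exact Finset.mem_Icc.2 ⟨by omega, by omega⟩⟩),
             (v ⟨k, Finset.mem_Icc.2 ⟨by omega, by omega⟩⟩,
              v ⟨k+1, Finset.mem_Icc.2 ⟨by omega, by omega⟩⟩))) ?_ ?_
        · intro γ
          funext i
          dsimp only
          by_cases h : i.1 ∈ Finset.Icc 1 (k-1)
          · rw [dif_pos h]
          · rw [dif_neg h]
            by_cases h2 : i.1 = k
            · rw [dif_pos h2]
              show a i.1 k γ = a k k γ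
              rw [h2]
            · rw [dif_neg h2]
              have hmem := Finset.mem_Icc.1 i.2
              have h3 : i.1 = k+1 := by
                simp only [Finset.mem_Icc] at h
                omega
              show a i.1 k γ = a (k+1) k γ
              rw [h3]
        · intro γ
          rfl
      rw [hYsplit]
      have h1 := Hc_pair_subadd hP0 hP1
        (fun γ => (fun i : ↥(Finset.Icc 1 (k-1)) => a i.1 k γ))
        (fun γ => (a k k γ, a (k+1) k γ)) C
      have h2 := Hc_pair_subadd hP0 hP1 (a k k) (a (k+1) k) C
      have h3 := Hc_tuple_subadd hP0 hP1 (Finset.Icc 1 (k-1)) (fun n => a n k) C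
      have h4 : ∑ n ∈ Finset.Icc 1 (k-1), Hc P (a n k) C
          ≤ ∑ n ∈ Finset.Icc 1 (k-1), He P (a n k) :=
        Finset.sum_le_sum fun n _ => Hc_le_He hP0 hP1 _ _
      linarith
    linarith

  -- Backward decoding inequality
  have BK : ∀ k, 1 ≤ k → k ≤ M →
      L + Hc P (a (k+1) k) (fun γ => ((fun ℓ : ↥(Finset.Icc 1 k) => w ℓ.1 γ), q γ))
      ≤ (∑ n ∈ Finset.Icc (k+2) (M+1), He P (a n k))
        + Hc P (a k k) (fun γ => ((fun ℓ : ↥(Finset.Icc 1 (k-1)) => w ℓ.1 γ), q γ))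
        + Hc P (a (k+1) k) (fun γ => ((fun ℓ : ↥(Finset.Icc 1 (k-1)) => w ℓ.1 γ), q γ)) := by
    intro k hk1 hkM
    have hk : k ∈ Finset.Icc 1 M := Finset.mem_Icc.2 ⟨hk1, hkM⟩
    set C : Γ → (↥(Finset.Icc 1 (k-1)) → σ) × β :=
      fun γ => ((fun ℓ : ↥(Finset.Icc 1 (k-1)) => w ℓ.1 γ), q γ) with hC
    set Y : Γ → (↥(Finset.Icc k (M+1)) → α) :=
      fun γ => (fun i : ↥(Finset.Icc k (M+1)) => a i.1 k γ) with hY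
    set Z : Γ → (↥(Finset.Icc 1 (k-1)) → α) :=
      fun γ => (fun i : ↥(Finset.Icc 1 (k-1)) => a i.1 k γ) with hZ
    have step0 : Hc P Z C ≤ 0 := by
      calc Hc P Z C ≤ ∑ n ∈ Finset.Icc 1 (k-1), Hc P (a n k) C :=
            Hc_tuple_subadd hP0 hP1 _ (fun n => a n k) C
        _ = 0 := by
            refine Finset.sum_eq_zero fun n hn => ?_
            have hn' := Finset.mem_Icc.1 hn
            exact hdetC k hk (Finset.Icc 1 (k-1)) n
              (Finset.mem_Icc.2 ⟨by omega, by omega⟩)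
              (fun h => Finset.mem_Icc.2 ⟨by omega, by omega⟩)
              (fun h2 h3 => ⟨Finset.mem_Icc.2 ⟨by omega, by omega⟩,
                Finset.mem_Icc.2 ⟨by omega, by omega⟩⟩)
              (fun h => by omega)
    have step1 : Hc P (w k) (fun γ => (Y γ, C γ)) = 0 := by
      refine le_antisymm ?_ (Hc_nonneg hP0 _ _)
      have hm1 : Hc P (w k) (fun γ => (Y γ, C γ))
          ≤ Hc P (fun γ => (w k γ, Z γ)) (fun γ => (Y γ, C γ)) :=
        Hc_mono_left hP0 _ Prod.fst (fun γ => rfl)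
      have hch : Hc P (fun γ => (w k γ, Z γ)) (fun γ => (Y γ, C γ))
          = Hc P Z (fun γ => (Y γ, C γ))
            + Hc P (w k) (fun γ => (Z γ, (Y γ, C γ))) :=
        Hc_chain (w k) Z (fun γ => (Y γ, C γ))
      have hZ1 : Hc P Z (fun γ => (Y γ, C γ)) ≤ Hc P Z C :=
        Hc_mono_right hP0 hP1 _ _ Prod.snd (fun γ => rfl)
      have hW1 : Hc P (w k) (fun γ => (Z γ, (Y γ, C γ)))
          ≤ Hc P (w k) (fun γ => ((fun n : ↥(Finset.Icc 1 (M+1)) => a n.1 k γ), q γ)) := by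
        refine Hc_mono_right hP0 hP1 _ _
          (fun p : (↥(Finset.Icc 1 (k-1)) → α)
              × ((↥(Finset.Icc k (M+1)) → α) × ((↥(Finset.Icc 1 (k-1)) → σ) × β)) =>
            ((fun n : ↥(Finset.Icc 1 (M+1)) =>
              if h : n.1 ∈ Finset.Icc k (M+1) then p.2.1 ⟨n.1, h⟩
              else p.1 ⟨n.1, by
                have h1 := Finset.mem_Icc.1 n.2
                simp only [Finset.mem_Icc] at h ⊢
                omega⟩), p.2.2.2)) ?_
        intro γ
        dsimp only
        refine congrArg₂ Prod.mk ?_ rfl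
        funext n
        by_cases h : n.1 ∈ Finset.Icc k (M+1)
        · rw [dif_pos h]
        · rw [dif_neg h]
      rw [Hdec k hk] at hW1
      linarith
    have step2 : L + Hc P (a (k+1) k) (fun γ => ((fun ℓ : ↥(Finset.Icc 1 k) => w ℓ.1 γ), q γ))
        ≤ Hc P Y C := by
      have hchainA : Hc P (fun γ => (w k γ, Y γ)) C
          = Hc P Y C + Hc P (w k) (fun γ => (Y γ, C γ)) := Hc_chain (w k) Y C
      have hswap : Hc P (fun γ => (w k γ, Y γ)) C = Hc P (fun γ => (Y γ, w k γ)) C :=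
        Hc_congr_left C (fun p : (↥(Finset.Icc k (M+1)) → α) × σ => (p.2, p.1))
          (fun p : σ × (↥(Finset.Icc k (M+1)) → α) => (p.2, p.1))
          (fun γ => rfl) (fun γ => rfl)
      have hchainB : Hc P (fun γ => (Y γ, w k γ)) C
          = Hc P (w k) C + Hc P Y (fun γ => (w k γ, C γ)) := Hc_chain Y (w k) C
      have hHwkC : Hc P (w k) C = L := by
        refine HW k hk (Finset.Icc 1 (k-1)) ?_ ?_
        · intro x hx
          have := Finset.mem_Icc.1 hx
          exact Finset.mem_Icc.2 ⟨by omega, by omega⟩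
        · simp only [Finset.mem_Icc]
          omega
      have hmono : Hc P (a (k+1) k) (fun γ => (w k γ, C γ))
          ≤ Hc P Y (fun γ => (w k γ, C γ)) :=
        Hc_mono_left hP0 _
          (fun v : (↥(Finset.Icc k (M+1)) → α) =>
            v ⟨k+1, Finset.mem_Icc.2 ⟨by omega, by omega⟩⟩) (fun γ => rfl)
      have hcongr : Hc P (a (k+1) k) (fun γ => (w k γ, C γ))
          = Hc P (a (k+1) k) (fun γ => ((fun ℓ : ↥(Finset.Icc 1 k) => w ℓ.1 γ), q γ)) := by
        refine Hc_congr_right (a (k+1) k)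
          (f := fun p : (↥(Finset.Icc 1 k) → σ) × β =>
            (p.1 ⟨k, Finset.mem_Icc.2 ⟨hk1, le_refl k⟩⟩,
             ((fun ℓ : ↥(Finset.Icc 1 (k-1)) => p.1 ⟨ℓ.1, by
                have := Finset.mem_Icc.1 ℓ.2
                exact Finset.mem_Icc.2 ⟨by omega, by omega⟩⟩), p.2)))
          (g := fun p : σ × ((↥(Finset.Icc 1 (k-1)) → σ) × β) =>
            ((fun ℓ : ↥(Finset.Icc 1 k) =>
              if h : ℓ.1 = k then p.1 else p.2.1 ⟨ℓ.1, by
                have := Finset.mem_Icc.1 ℓ.2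
                simp only [Finset.mem_Icc]
                omega⟩), p.2.2)) ?_ ?_
        · intro γ
          rfl
        · intro γ
          dsimp only
          refine congrArg₂ Prod.mk ?_ rfl
          funext ℓ
          by_cases h : ℓ.1 = k
          · rw [dif_pos h]
            show w ℓ.1 γ = w k γ
            rw [h]
          · rw [dif_neg h]
      rw [step1, add_zero] at hchainA
      rw [← hchainA, hswap, hchainB, hHwkC, ← hcongr]
      linarith
    have step3 : Hc P Y C ≤ (∑ n ∈ Finset.Icc (k+2) (M+1), He P (a n k))
        + Hc P (a k k) C + Hc P (a (k+1) k) C := by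
      have hYsplit : Hc P Y C = Hc P (fun γ =>
          ((fun i : ↥(Finset.Icc (k+2) (M+1)) => a i.1 k γ), (a k k γ, a (k+1) k γ))) C := by
        refine Hc_congr_left C
          (f := fun p : (↥(Finset.Icc (k+2) (M+1)) → α) × (α × α) =>
            (fun i : ↥(Finset.Icc k (M+1)) =>
              if h : i.1 ∈ Finset.Icc (k+2) (M+1) then p.1 ⟨i.1, h⟩
              else if h2 : i.1 = k then p.2.1 else p.2.2))
          (g := fun v : (↥(Finset.Icc k (M+1)) → α) =>
            ((fun i : ↥(Finset.Icc (k+2) (M+1)) => v ⟨i.1, by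
                have := Finset.mem_Icc.1 i.2
                exact Finset.mem_Icc.2 ⟨by omega, by omega⟩⟩),
             (v ⟨k, Finset.mem_Icc.2 ⟨by omega, by omega⟩⟩,
              v ⟨k+1, Finset.mem_Icc.2 ⟨by omega, by omega⟩⟩))) ?_ ?_
        · intro γ
          funext i
          dsimp only
          by_cases h : i.1 ∈ Finset.Icc (k+2) (M+1)
          · rw [dif_pos h]
          · rw [dif_neg h]
            by_cases h2 : i.1 = k
            · rw [dif_pos h2]
              show a i.1 k γ = a k k γ
              rw [h2]
            · rw [dif_neg h2]
              have hmem := Finset.mem_Icc.1 i.2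
              have h3 : i.1 = k+1 := by
                simp only [Finset.mem_Icc] at h
                omega
              show a i.1 k γ = a (k+1) k γ
              rw [h3]
        · intro γ
          rfl
      rw [hYsplit]
      have h1 := Hc_pair_subadd hP0 hP1
        (fun γ => (fun i : ↥(Finset.Icc (k+2) (M+1)) => a i.1 k γ))
        (fun γ => (a k k γ, a (k+1) k γ)) C
      have h2 := Hc_pair_subadd hP0 hP1 (a k k) (a (k+1) k) C
      have h3 := Hc_tuple_subadd hP0 hP1 (Finset.Icc (k+2) (M+1)) (fun n => a n k) C
      have h4 : ∑ n ∈ Finset.Icc (k+2) (M+1), Hc P (a n k) C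
          ≤ ∑ n ∈ Finset.Icc (k+2) (M+1), He P (a n k) :=
        Finset.sum_le_sum fun n _ => Hc_le_He hP0 hP1 _ _
      linarith
    linarith
  -- endpoint bounds
  have hmem1 : (1:ℕ) ∈ Finset.Icc 1 M := Finset.mem_Icc.2 ⟨le_refl 1, by omega⟩
  have hmemM : M ∈ Finset.Icc 1 M := Finset.mem_Icc.2 ⟨by omega, le_refl M⟩
  have HA1 : Hc P (a 1 1) q ≤ L := by
    have h1 : Hc P (a 1 1) q ≤ Hc P (fun γ => (a 1 1 γ, w 1 γ)) q :=
      Hc_mono_left hP0 q Prod.fst (fun γ => rfl)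
    have h2 : Hc P (fun γ => (a 1 1 γ, w 1 γ)) q
        = Hc P (w 1) q + Hc P (a 1 1) (fun γ => (w 1 γ, q γ)) := Hc_chain (a 1 1) (w 1) q
    rw [Hdet1 1 hmem1, HWq 1 hmem1] at h2
    linarith
  have HAN : Hc P (a (M+1) M) q ≤ L := by
    have h1 : Hc P (a (M+1) M) q ≤ Hc P (fun γ => (a (M+1) M γ, w M γ)) q :=
      Hc_mono_left hP0 q Prod.fst (fun γ => rfl)
    have h2 : Hc P (fun γ => (a (M+1) M γ, w M γ)) q
        = Hc P (w M) q + Hc P (a (M+1) M) (fun γ => (w M γ, q γ)) :=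
      Hc_chain (a (M+1) M) (w M) q
    rw [HdetN M hmemM, HWq M hmemM] at h2
    linarith
  -- empty conditioning tuples
  have hemptyF : ∀ (x : Γ → α),
      Hc P x (fun γ => ((fun ℓ : ↥(Finset.Icc (M+1) M) => w ℓ.1 γ), q γ)) = Hc P x q := by
    intro x
    refine Hc_congr_right x
      (f := fun b : β => ((fun ℓ : ↥(Finset.Icc (M+1) M) =>
        (absurd (Finset.mem_Icc.1 ℓ.2) (by omega) : σ)), b))
      (g := Prod.snd) ?_ ?_
    · intro γ
      refine congrArg₂ Prod.mk ?_ rfl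
      funext ℓ
      exact absurd (Finset.mem_Icc.1 ℓ.2) (by omega)
    · intro γ
      rfl
  have hemptyB : ∀ (x : Γ → α),
      Hc P x (fun γ => ((fun ℓ : ↥(Finset.Icc 1 0) => w ℓ.1 γ), q γ)) = Hc P x q := by
    intro x
    refine Hc_congr_right x
      (f := fun b : β => ((fun ℓ : ↥(Finset.Icc 1 0) =>
        (absurd (Finset.mem_Icc.1 ℓ.2) (by omega) : σ)), b))
      (g := Prod.snd) ?_ ?_
    · intro γ
      refine congrArg₂ Prod.mk ?_ rfl
      funext ℓ
      exact absurd (Finset.mem_Icc.1 ℓ.2) (by omega)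
    · intro γ
      rfl
  -- forward base case, k = M
  have baseF : ((M + 1 - M : ℕ) : ℝ) * L
      + Hc P (a M M) (fun γ => ((fun ℓ : ↥(Finset.Icc M M) => w ℓ.1 γ), q γ))
      ≤ (∑ j ∈ Finset.Icc M M, ((∑ n ∈ Finset.Icc 1 (j-1), He P (a n j)) + He P (a j j)))
        + Hc P (a (M+1) M) q := by
    have h := FK M (by omega) (le_refl M)
    rw [hemptyF (a (M+1) M), hemptyF (a M M)] at h
    have h2 : Hc P (a M M) q ≤ He P (a M M) := Hc_le_He hP0 hP1 _ _
    have hcast : ((M + 1 - M : ℕ) : ℝ) = 1 := by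
      have : M + 1 - M = 1 := by omega
      rw [this, Nat.cast_one]
    have hsum1 : (∑ j ∈ Finset.Icc M M,
          ((∑ n ∈ Finset.Icc 1 (j-1), He P (a n j)) + He P (a j j)))
        = (∑ n ∈ Finset.Icc 1 (M-1), He P (a n M)) + He P (a M M) := by
      rw [Finset.Icc_self, Finset.sum_singleton]
    rw [hcast, hsum1]
    linarith
  -- forward induction
  have forward : ∀ i : ℕ, ∀ k, 1 ≤ k → k ≤ M → M - k ≤ i →
      ((M + 1 - k : ℕ) : ℝ) * L
        + Hc P (a k k) (fun γ => ((fun ℓ : ↥(Finset.Icc k M) => w ℓ.1 γ), q γ))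
      ≤ (∑ j ∈ Finset.Icc k M, ((∑ n ∈ Finset.Icc 1 (j-1), He P (a n j)) + He P (a j j)))
        + Hc P (a (M+1) M) q := by
    intro i
    induction i with
    | zero =>
        intro k hk1 hkM hle
        have hkeq : k = M := by omega
        subst hkeq
        exact baseF
    | succ i ih =>
        intro k hk1 hkM hle
        by_cases hkeq : k = M
        · subst hkeq
          exact baseF
        · have hkM' : k + 1 ≤ M := by omega
          have hFK := FK k hk1 hkM
          have hpriv' : Hc P (a (k+1) k)
                (fun γ => ((fun ℓ : ↥(Finset.Icc (k+1) M) => w ℓ.1 γ), q γ))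
              = Hc P (a (k+1) (k+1))
                (fun γ => ((fun ℓ : ↥(Finset.Icc (k+1) M) => w ℓ.1 γ), q γ)) := by
            have h := Hpriv (k+1) (by omega) hkM' (Finset.Icc (k+1) M)
              (fun x hx => by
                have := Finset.mem_Icc.1 hx
                exact Finset.mem_Icc.2 ⟨by omega, by omega⟩)
            simp only [Nat.add_sub_cancel] at h
            exact h.symm
          have hih := ih (k+1) (by omega) hkM' (by omega)
          have hle2 : Hc P (a k k)
              (fun γ => ((fun ℓ : ↥(Finset.Icc (k+1) M) => w ℓ.1 γ), q γ))
              ≤ He P (a k k) := Hc_le_He hP0 hP1 _ _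
          have hins : Finset.Icc k M = insert k (Finset.Icc (k+1) M) := by
            ext x
            simp only [Finset.mem_Icc, Finset.mem_insert]
            omega
          have hsum : (∑ j ∈ Finset.Icc k M,
                ((∑ n ∈ Finset.Icc 1 (j-1), He P (a n j)) + He P (a j j)))
              = ((∑ n ∈ Finset.Icc 1 (k-1), He P (a n k)) + He P (a k k))
                + (∑ j ∈ Finset.Icc (k+1) M,
                  ((∑ n ∈ Finset.Icc 1 (j-1), He P (a n j)) + He P (a j j))) := by
            rw [hins, Finset.sum_insert (by simp [Finset.mem_Icc])]
          have hcast : ((M + 1 - k : ℕ) : ℝ) = ((M + 1 - (k+1) : ℕ) : ℝ) + 1 := by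
            have h1 : M + 1 - k = (M + 1 - (k+1)) + 1 := by omega
            rw [h1, Nat.cast_add, Nat.cast_one]
          rw [hcast, hsum]
          rw [hpriv'] at hFK
          linarith
  -- backward base case, k = 1
  have baseB : ((1:ℕ) : ℝ) * L
      + Hc P (a 2 1) (fun γ => ((fun ℓ : ↥(Finset.Icc 1 1) => w ℓ.1 γ), q γ))
      ≤ (∑ j ∈ Finset.Icc 1 1,
          ((∑ n ∈ Finset.Icc (j+2) (M+1), He P (a n j)) + He P (a (j+1) j)))
        + Hc P (a 1 1) q := by
    have h := BK 1 (le_refl 1) (by omega)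
    have h0 : (1:ℕ) - 1 = 0 := by omega
    rw [h0] at h
    rw [hemptyB (a 1 1), hemptyB (a 2 1)] at h
    have h2 : Hc P (a 2 1) q ≤ He P (a 2 1) := Hc_le_He hP0 hP1 _ _
    have hsum1 : (∑ j ∈ Finset.Icc 1 1,
          ((∑ n ∈ Finset.Icc (j+2) (M+1), He P (a n j)) + He P (a (j+1) j)))
        = (∑ n ∈ Finset.Icc 3 (M+1), He P (a n 1)) + He P (a 2 1) := by
      rw [Finset.Icc_self, Finset.sum_singleton]
    rw [Nat.cast_one, hsum1]
    norm_num at h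
    linarith
  -- backward induction
  have backward : ∀ i : ℕ, ∀ k, 1 ≤ k → k ≤ M → k ≤ i →
      ((k:ℕ) : ℝ) * L
        + Hc P (a (k+1) k) (fun γ => ((fun ℓ : ↥(Finset.Icc 1 k) => w ℓ.1 γ), q γ))
      ≤ (∑ j ∈ Finset.Icc 1 k,
          ((∑ n ∈ Finset.Icc (j+2) (M+1), He P (a n j)) + He P (a (j+1) j)))
        + Hc P (a 1 1) q := by
    intro i
    induction i with
    | zero =>
        intro k hk1 hkM hle
        omega
    | succ i ih =>
        intro k hk1 hkM hle
        by_cases hkeq : k = 1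
        · subst hkeq
          exact baseB
        · have hk2 : 2 ≤ k := by omega
          have hBK := BK k hk1 hkM
          have hpriv' : Hc P (a k k)
                (fun γ => ((fun ℓ : ↥(Finset.Icc 1 (k-1)) => w ℓ.1 γ), q γ))
              = Hc P (a k (k-1))
                (fun γ => ((fun ℓ : ↥(Finset.Icc 1 (k-1)) => w ℓ.1 γ), q γ)) :=
            Hpriv k hk2 hkM (Finset.Icc 1 (k-1))
              (fun x hx => by
                have := Finset.mem_Icc.1 hx
                exact Finset.mem_Icc.2 ⟨by omega, by omega⟩)
          have hih := ih (k-1) (by omega) (by omega) (by omega)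
          have hk1' : k - 1 + 1 = k := by omega
          rw [hk1'] at hih
          have hle2 : Hc P (a (k+1) k)
              (fun γ => ((fun ℓ : ↥(Finset.Icc 1 (k-1)) => w ℓ.1 γ), q γ))
              ≤ He P (a (k+1) k) := Hc_le_He hP0 hP1 _ _
          have hins : Finset.Icc 1 k = insert k (Finset.Icc 1 (k-1)) := by
            ext x
            simp only [Finset.mem_Icc, Finset.mem_insert]
            omega
          have hsum : (∑ j ∈ Finset.Icc 1 k,
                ((∑ n ∈ Finset.Icc (j+2) (M+1), He P (a n j)) + He P (a (j+1) j)))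
              = ((∑ n ∈ Finset.Icc (k+2) (M+1), He P (a n k)) + He P (a (k+1) k))
                + (∑ j ∈ Finset.Icc 1 (k-1),
                  ((∑ n ∈ Finset.Icc (j+2) (M+1), He P (a n j)) + He P (a (j+1) j))) := by
            rw [hins, Finset.sum_insert (by simp only [Finset.mem_Icc]; omega)]
          have hcast : ((k:ℕ) : ℝ) = ((k - 1 : ℕ) : ℝ) + 1 := by
            have h1 : k = (k - 1) + 1 := by omega
            nth_rewrite 1 [h1]
            rw [Nat.cast_add, Nat.cast_one]
          rw [hcast, hsum]
          rw [hpriv'] at hBK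
          linarith
  -- conclude
  have Pf1 := forward (M - 1) 1 (le_refl 1) (by omega) (by omega)
  have PbM := backward M M (by omega) (le_refl M) (le_refl M)
  have hnn1 := Hc_nonneg hP0 (a 1 1)
    (fun γ => ((fun ℓ : ↥(Finset.Icc 1 M) => w ℓ.1 γ), q γ))
  have hnn2 := Hc_nonneg hP0 (a (M+1) M)
    (fun γ => ((fun ℓ : ↥(Finset.Icc 1 M) => w ℓ.1 γ), q γ))
  have hcastM : ((M + 1 - 1 : ℕ) : ℝ) = (M:ℝ) := by
    have : M + 1 - 1 = M := by omega
    rw [this]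
  rw [hcastM] at Pf1
  -- merge the two triangle sums
  have hFG : ∀ j, 1 ≤ j → j ≤ M →
      ((∑ n ∈ Finset.Icc 1 (j-1), He P (a n j)) + He P (a j j))
      + ((∑ n ∈ Finset.Icc (j+2) (M+1), He P (a n j)) + He P (a (j+1) j))
      = ∑ n ∈ Finset.Icc 1 (M+1), He P (a n j) := by
    intro j hj1 hjM
    have e1 : Finset.Icc 1 (j-1) = Finset.Ioc 0 (j-1) := Finset.Icc_add_one_left_eq_Ioc 0 (j-1)
    have e2 : Finset.Icc (j+2) (M+1) = Finset.Ioc (j+1) (M+1) := Finset.Icc_add_one_left_eq_Ioc (j+1) (M+1)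
    have e3 : Finset.Icc 1 (M+1) = Finset.Ioc 0 (M+1) := Finset.Icc_add_one_left_eq_Ioc 0 (M+1)
    have emid : Finset.Ioc (j-1) (j+1) = insert j {j+1} := by
      ext x
      simp only [Finset.mem_Ioc, Finset.mem_insert, Finset.mem_singleton]
      omega
    have hmid : ∑ n ∈ Finset.Ioc (j-1) (j+1), He P (a n j)
        = He P (a j j) + He P (a (j+1) j) := by
      rw [emid, Finset.sum_insert (by simp), Finset.sum_singleton]
    have c1 := Finset.sum_Ioc_consecutive (fun n => He P (a n j))
      (by omega : 0 ≤ j-1) (by omega : j-1 ≤ j+1)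
    have c2 := Finset.sum_Ioc_consecutive (fun n => He P (a n j))
      (by omega : 0 ≤ j+1) (by omega : j+1 ≤ M+1)
    rw [e1, e2, e3]
    rw [← c2, ← c1, hmid]
    ring
  have hT : (∑ j ∈ Finset.Icc 1 M, ((∑ n ∈ Finset.Icc 1 (j-1), He P (a n j)) + He P (a j j)))
      + (∑ j ∈ Finset.Icc 1 M,
          ((∑ n ∈ Finset.Icc (j+2) (M+1), He P (a n j)) + He P (a (j+1) j)))
      = ∑ j ∈ Finset.Icc 1 M, ∑ n ∈ Finset.Icc 1 (M+1), He P (a n j) := by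
    rw [← Finset.sum_add_distrib]
    refine Finset.sum_congr rfl fun j hj => ?_
    have := Finset.mem_Icc.1 hj
    exact hFG j (by omega) (by omega)
  linarith


end Main

lemma measurableSet_singleton_pi {ι : Type*} [Countable ι] {π : ι → Type*}
    [∀ i, MeasurableSpace (π i)] [∀ i, MeasurableSingletonClass (π i)]
    (f : ∀ i, π i) : MeasurableSet ({f} : Set (∀ i, π i)) := by
  have : ({f} : Set (∀ i, π i)) = ⋂ i, (fun v : ∀ i, π i => v i) ⁻¹' {f i} := by
    ext v
    simp [funext_iff]
  rw [this]
  exact MeasurableSet.iInter fun i => measurable_pi_apply i (measurableSet_singleton (f i))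

end PIRaux

open PIRaux

open ProbabilityTheory

/-- Converse bound for local PIR on the path graph `P_N` (server `1` stores `W_1`, server `N`
stores `W_{N−1}`, and server `n` for `2 ≤ n ≤ N−1` stores `W_{n−1}, W_n`): if the messages
`W_1, …, W_{N−1}` are mutually independent with `H(W_k) = L`, the queries `Q` are independent
of the messages, each answer `A_n^{[k]}` (here `A n k`) is a deterministic function of the
server's storage and `Q`, the desired message is decodable from all the answers and `Q`, and
the privacy-swap equality `H(A_n^{[n]} | W_S, Q) = H(A_n^{[n−1]} | W_S, Q)` holds for every
`2 ≤ n ≤ N−1` and every subset `S ⊆ {1, …, N−1}` of message indices, then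
`∑_{k=1}^{N−1} ∑_{n=1}^{N} H(A_n^{[k]}) ≥ (2N − 4)·L`. -/
theorem stmt_12 {Ω : Type*} [MeasurableSpace Ω] (μ : Measure Ω) [IsProbabilityMeasure μ]
    (N : ℕ) (hN : 3 ≤ N) (L : ℝ) (hL : 0 ≤ L)
    {σ β α : Type*} [Fintype σ] [Fintype β] [Fintype α]
    [MeasurableSpace σ] [MeasurableSingletonClass σ]
    [MeasurableSpace β] [MeasurableSingletonClass β]
    [MeasurableSpace α] [MeasurableSingletonClass α]
    (W : ℕ → Ω → σ) (Q : Ω → β) (A : ℕ → ℕ → Ω → α)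
    (hWmeas : ∀ k, Measurable (W k)) (hQmeas : Measurable Q)
    (hAmeas : ∀ n k, Measurable (A n k))
    (hWindep : iIndepFun
      (fun k : (Finset.Icc 1 (N - 1) : Finset ℕ) => W k.1) μ)
    (hWent : ∀ k ∈ Finset.Icc 1 (N - 1), entropy μ (W k) = L)
    (hQindep : mutualInfo μ
      (fun ω => (fun k : (Finset.Icc 1 (N - 1) : Finset ℕ) => W k.1 ω)) Q = 0)
    (hdet1 : ∀ k ∈ Finset.Icc 1 (N - 1),
      condEntropy μ (A 1 k) (fun ω => (W 1 ω, Q ω)) = 0)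
    (hdetN : ∀ k ∈ Finset.Icc 1 (N - 1),
      condEntropy μ (A N k) (fun ω => (W (N - 1) ω, Q ω)) = 0)
    (hdet : ∀ k ∈ Finset.Icc 1 (N - 1), ∀ n, 2 ≤ n → n ≤ N - 1 →
      condEntropy μ (A n k) (fun ω => (W (n - 1) ω, W n ω, Q ω)) = 0)
    (hdec : ∀ k ∈ Finset.Icc 1 (N - 1),
      condEntropy μ (W k)
        (fun ω => ((fun n : (Finset.Icc 1 N : Finset ℕ) => A n.1 k ω), Q ω)) = 0)
    (hpriv : ∀ n, 2 ≤ n → n ≤ N - 1 → ∀ S : Finset ℕ, S ⊆ Finset.Icc 1 (N - 1) →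
      condEntropy μ (A n n) (fun ω => ((fun ℓ : S => W ℓ.1 ω), Q ω))
        = condEntropy μ (A n (n - 1)) (fun ω => ((fun ℓ : S => W ℓ.1 ω), Q ω))) :
    ∑ k ∈ Finset.Icc 1 (N - 1), ∑ n ∈ Finset.Icc 1 N, entropy μ (A n k)
      ≥ (2 * (N : ℝ) - 4) * L := by
  classical
  obtain ⟨M, rfl⟩ : ∃ M, N = M + 1 := ⟨N - 1, by omega⟩
  have hM : 2 ≤ M := by omega
  simp only [Nat.add_sub_cancel] at hWindep hWent hQindep hdet1 hdetN hdet hdec hpriv ⊢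
  have hmem1 : (1:ℕ) ∈ Finset.Icc 1 M := Finset.mem_Icc.2 ⟨le_refl 1, by omega⟩
  have hmem1' : (1:ℕ) ∈ Finset.Icc 1 (M+1) := Finset.mem_Icc.2 ⟨le_refl 1, by omega⟩
  -- the grand tuple
  set G : Ω → (↥(Finset.Icc 1 M) → σ) × β × (↥(Finset.Icc 1 (M+1)) → ↥(Finset.Icc 1 M) → α) :=
    fun ω => (fun k => W k.1 ω, Q ω, fun n k => A n.1 k.1 ω) with hG
  have hGfib : ∀ γ, MeasurableSet (G ⁻¹' {γ}) := by
    intro γ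
    have hset : G ⁻¹' {γ} = (⋂ k : ↥(Finset.Icc 1 M), (W k.1) ⁻¹' {γ.1 k})
        ∩ ((Q ⁻¹' {γ.2.1})
          ∩ ⋂ n : ↥(Finset.Icc 1 (M+1)), ⋂ k : ↥(Finset.Icc 1 M),
              (A n.1 k.1) ⁻¹' {γ.2.2 n k}) := by
      ext ω
      simp only [Set.mem_preimage, Set.mem_singleton_iff, Set.mem_inter_iff,
        Set.mem_iInter, hG, Prod.ext_iff, funext_iff]
      try tauto
    rw [hset]
    refine MeasurableSet.inter
      (MeasurableSet.iInter fun k => hWmeas k.1 (measurableSet_singleton _))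
      (MeasurableSet.inter (hQmeas (measurableSet_singleton _))
        (MeasurableSet.iInter fun n => MeasurableSet.iInter fun k =>
          hAmeas n.1 k.1 (measurableSet_singleton _)))
  set P := PofG μ G with hP
  have hP0 : ∀ γ, 0 ≤ P γ := PofG_nonneg μ G
  have hP1 : ∑ γ, P γ = 1 := bridge_sum_one μ G hGfib
  -- pmf-land variables
  set w : ℕ → ((↥(Finset.Icc 1 M) → σ) × β × (↥(Finset.Icc 1 (M+1)) → ↥(Finset.Icc 1 M) → α)) → σ := fun k γ =>
    if h : k ∈ Finset.Icc 1 M then γ.1 ⟨k, h⟩ else γ.1 ⟨1, hmem1⟩ with hw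
  set q : ((↥(Finset.Icc 1 M) → σ) × β × (↥(Finset.Icc 1 (M+1)) → ↥(Finset.Icc 1 M) → α)) → β := fun γ => γ.2.1 with hq
  set a : ℕ → ℕ → ((↥(Finset.Icc 1 M) → σ) × β × (↥(Finset.Icc 1 (M+1)) → ↥(Finset.Icc 1 M) → α)) → α := fun n k γ =>
    if h : n ∈ Finset.Icc 1 (M+1) ∧ k ∈ Finset.Icc 1 M
    then γ.2.2 ⟨n, h.1⟩ ⟨k, h.2⟩ else γ.2.2 ⟨1, hmem1'⟩ ⟨1, hmem1⟩ with ha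
  set wfull : ((↥(Finset.Icc 1 M) → σ) × β × (↥(Finset.Icc 1 (M+1)) → ↥(Finset.Icc 1 M) → α)) → (↥(Finset.Icc 1 M) → σ) := fun γ => γ.1 with hwfull
  -- bridging equalities
  have hwG : ∀ k, k ∈ Finset.Icc 1 M → ∀ ω, W k ω = w k (G ω) := by
    intro k hk ω
    simp only [hw, hG, dif_pos hk]
  have hqG : ∀ ω, Q ω = q (G ω) := fun ω => rfl
  have haG : ∀ n k, n ∈ Finset.Icc 1 (M+1) → k ∈ Finset.Icc 1 M →
      ∀ ω, A n k ω = a n k (G ω) := by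
    intro n k hn hk ω
    simp only [ha, hG, dif_pos (And.intro hn hk)]
  -- transported entropy of messages
  have HWent : ∀ k ∈ Finset.Icc 1 M, He P (w k) = L := by
    intro k hk
    rw [← bridge_entropy μ G hGfib (w k) (W k) (hwG k hk)]
    exact hWent k hk
  -- transported independence of Q from all messages
  have HQpair : He P (fun γ => (wfull γ, q γ)) = He P wfull + He P q := by
    have h1 : entropy μ (fun ω => (fun k : ↥(Finset.Icc 1 M) => W k.1 ω)) = He P wfull :=
      bridge_entropy μ G hGfib wfull _ (fun ω => rfl)
    have h2 : condEntropy μ (fun ω => (fun k : ↥(Finset.Icc 1 M) => W k.1 ω)) Q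
        = Hc P wfull q :=
      bridge_condEntropy μ G hGfib wfull q _ Q (fun ω => rfl) hqG
    have hQ3 : entropy μ (fun ω => (fun k : ↥(Finset.Icc 1 M) => W k.1 ω))
        - condEntropy μ (fun ω => (fun k : ↥(Finset.Icc 1 M) => W k.1 ω)) Q = 0 := hQindep
    rw [h1, h2] at hQ3
    unfold Hc at hQ3
    linarith
  -- the packaged independence statement
  have HW : ∀ k ∈ Finset.Icc 1 M, ∀ S : Finset ℕ, S ⊆ Finset.Icc 1 M → k ∉ S →
      Hc P (w k) (fun γ => ((fun ℓ : ↥S => w ℓ.1 γ), q γ)) = L := by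
    intro k hk S hS hkS
    set wS : ((↥(Finset.Icc 1 M) → σ) × β × (↥(Finset.Icc 1 (M+1)) → ↥(Finset.Icc 1 M) → α)) → (↥S → σ) := fun γ => (fun ℓ : ↥S => w ℓ.1 γ) with hwS
    -- measure-level independence
    have hindep : IndepFun (fun ω => w k (G ω)) (fun ω => wS (G ω)) μ := by
      have hdisj : Disjoint ({⟨k, hk⟩} : Finset ↥(Finset.Icc 1 M))
          (Finset.univ.filter (fun x : ↥(Finset.Icc 1 M) => x.1 ∈ S)) := by
        rw [Finset.disjoint_left]
        intro x hx hx2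
        rw [Finset.mem_singleton] at hx
        rw [Finset.mem_filter] at hx2
        subst hx
        exact hkS hx2.2
      have hbase := hWindep.indepFun_finset _ _ hdisj (fun i => hWmeas i.1)
      have hcomp := hbase.comp
        (φ := fun v : (↥({⟨k, hk⟩} : Finset ↥(Finset.Icc 1 M)) → σ) =>
          v ⟨⟨k, hk⟩, Finset.mem_singleton_self _⟩)
        (ψ := fun v : (↥(Finset.univ.filter
              (fun x : ↥(Finset.Icc 1 M) => x.1 ∈ S)) → σ) =>
          (fun ℓ : ↥S => v ⟨⟨ℓ.1, hS ℓ.2⟩, Finset.mem_filter.2 ⟨Finset.mem_univ _, ℓ.2⟩⟩))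
        (measurable_pi_apply (X := fun _ => σ) _)
        (measurable_pi_lambda _ (fun ℓ => measurable_pi_apply _))
      have he1 : (fun ω => w k (G ω))
          = (fun v : (↥({⟨k, hk⟩} : Finset ↥(Finset.Icc 1 M)) → σ) =>
              v ⟨⟨k, hk⟩, Finset.mem_singleton_self _⟩)
            ∘ (fun ω (i : ↥({⟨k, hk⟩} : Finset ↥(Finset.Icc 1 M))) => W i.1.1 ω) := by
        funext ω
        exact (hwG k hk ω).symm
      have he2 : (fun ω => wS (G ω))
          = (fun v : (↥(Finset.univ.filter
                (fun x : ↥(Finset.Icc 1 M) => x.1 ∈ S)) → σ) =>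
              (fun ℓ : ↥S => v ⟨⟨ℓ.1, hS ℓ.2⟩,
                Finset.mem_filter.2 ⟨Finset.mem_univ _, ℓ.2⟩⟩))
            ∘ (fun ω (i : ↥(Finset.univ.filter
                (fun x : ↥(Finset.Icc 1 M) => x.1 ∈ S))) => W i.1.1 ω) := by
        funext ω
        funext ℓ
        exact (hwG ℓ.1 (hS ℓ.2) ω).symm
      rw [he1, he2]
      exact hcomp
    -- pm factorization
    have hfac : ∀ x f, pm P (fun γ => (w k γ, wS γ)) (x, f)
        = pm P (w k) x * pm P (wS) f := by
      intro x f
      rw [← bridge_pm μ G hGfib (fun γ => (w k γ, wS γ)) (x, f),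
        ← bridge_pm μ G hGfib (w k) x, ← bridge_pm μ G hGfib wS f]
      have hsplit : ((fun ω => ((fun γ => (w k γ, wS γ)) (G ω))) ⁻¹' {(x, f)})
          = ((fun ω => w k (G ω)) ⁻¹' {x}) ∩ ((fun ω => wS (G ω)) ⁻¹' {f}) := by
        ext ω
        simp [Prod.ext_iff]
      rw [hsplit,
        hindep.measure_inter_preimage_eq_mul _ _ (measurableSet_singleton x)
          (measurableSet_singleton_pi f),
        ENNReal.toReal_mul]
    have hHe2 : He P (fun γ => (w k γ, wS γ)) = He P (w k) + He P wS :=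
      He_indep hP1 hfac
    -- DPI facts
    have hdpi1 : He P (fun γ => ((fun γ' => (w k γ', wS γ')) γ, q γ))
        = He P (fun γ => (w k γ, wS γ)) + He P q := by
      refine He_pair_add_of_comp hP0 hP1 HQpair
        (fun h : (↥(Finset.Icc 1 M) → σ) =>
          (h ⟨k, hk⟩, fun ℓ : ↥S => h ⟨ℓ.1, hS ℓ.2⟩)) ?_
      intro γ
      refine congrArg₂ Prod.mk ?_ ?_
      · simp only [hw, dif_pos hk, hwfull]
      · funext ℓ
        simp only [hwS, hw, dif_pos (hS ℓ.2), hwfull]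
    have hdpi2 : He P (fun γ => (wS γ, q γ)) = He P wS + He P q := by
      refine He_pair_add_of_comp hP0 hP1 HQpair
        (fun h : (↥(Finset.Icc 1 M) → σ) => (fun ℓ : ↥S => h ⟨ℓ.1, hS ℓ.2⟩)) ?_
      intro γ
      funext ℓ
      simp only [hwS, hw, dif_pos (hS ℓ.2), hwfull]
    have hassoc : He P (fun γ => (w k γ, (wS γ, q γ)))
        = He P (fun γ => ((w k γ, wS γ), q γ)) :=
      (He_pair_assoc (w k) wS q).symm
    show Hc P (w k) (fun γ => (wS γ, q γ)) = L
    unfold Hc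
    rw [hassoc]
    have : He P (fun γ => ((w k γ, wS γ), q γ))
        = He P (fun γ => (w k γ, wS γ)) + He P q := hdpi1
    rw [this, hHe2, hdpi2, HWent k hk]
    ring
  have HWq : ∀ k ∈ Finset.Icc 1 M, Hc P (w k) q = L := by
    intro k hk
    have hdpi : He P (fun γ => (w k γ, q γ)) = He P (w k) + He P q := by
      refine He_pair_add_of_comp hP0 hP1 HQpair
        (fun h : (↥(Finset.Icc 1 M) → σ) => h ⟨k, hk⟩) ?_
      intro γ
      simp only [hw, dif_pos hk, hwfull]
    unfold Hc
    rw [hdpi, HWent k hk]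
    ring
  -- transported answer hypotheses
  have Hdet1' : ∀ k ∈ Finset.Icc 1 M, Hc P (a 1 k) (fun γ => (w 1 γ, q γ)) = 0 := by
    intro k hk
    rw [← bridge_condEntropy μ G hGfib (a 1 k) (fun γ => (w 1 γ, q γ))
      (A 1 k) (fun ω => (W 1 ω, Q ω)) (haG 1 k hmem1' hk)
      (fun ω => by rw [hwG 1 hmem1 ω])]
    exact hdet1 k hk
  have HdetN' : ∀ k ∈ Finset.Icc 1 M, Hc P (a (M+1) k) (fun γ => (w M γ, q γ)) = 0 := by
    intro k hk
    have hmemM : M ∈ Finset.Icc 1 M := Finset.mem_Icc.2 ⟨by omega, le_refl M⟩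
    have hmemM1 : M+1 ∈ Finset.Icc 1 (M+1) := Finset.mem_Icc.2 ⟨by omega, le_refl _⟩
    rw [← bridge_condEntropy μ G hGfib (a (M+1) k) (fun γ => (w M γ, q γ))
      (A (M+1) k) (fun ω => (W M ω, Q ω)) (haG (M+1) k hmemM1 hk)
      (fun ω => by rw [hwG M hmemM ω])]
    exact hdetN k hk
  have Hdet' : ∀ k ∈ Finset.Icc 1 M, ∀ n, 2 ≤ n → n ≤ M →
      Hc P (a n k) (fun γ => (w (n-1) γ, (w n γ, q γ))) = 0 := by
    intro k hk n hn2 hnM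
    have hm1 : n - 1 ∈ Finset.Icc 1 M := Finset.mem_Icc.2 ⟨by omega, by omega⟩
    have hm2 : n ∈ Finset.Icc 1 M := Finset.mem_Icc.2 ⟨by omega, by omega⟩
    have hm3 : n ∈ Finset.Icc 1 (M+1) := Finset.mem_Icc.2 ⟨by omega, by omega⟩
    rw [← bridge_condEntropy μ G hGfib (a n k) (fun γ => (w (n-1) γ, (w n γ, q γ)))
      (A n k) (fun ω => (W (n-1) ω, (W n ω, Q ω))) (haG n k hm3 hk)
      (fun ω => by rw [hwG (n-1) hm1 ω, hwG n hm2 ω])]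
    exact hdet k hk n hn2 hnM
  have Hdec' : ∀ k ∈ Finset.Icc 1 M,
      Hc P (w k) (fun γ => ((fun n : ↥(Finset.Icc 1 (M+1)) => a n.1 k γ), q γ)) = 0 := by
    intro k hk
    rw [← bridge_condEntropy μ G hGfib (w k)
      (fun γ => ((fun n : ↥(Finset.Icc 1 (M+1)) => a n.1 k γ), q γ))
      (W k) (fun ω => ((fun n : ↥(Finset.Icc 1 (M+1)) => A n.1 k ω), Q ω))
      (hwG k hk)
      (fun ω => by
        refine congrArg₂ Prod.mk ?_ rfl
        funext n
        exact haG n.1 k n.2 hk ω)]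
    exact hdec k hk
  have Hpriv' : ∀ n, 2 ≤ n → n ≤ M → ∀ S : Finset ℕ, S ⊆ Finset.Icc 1 M →
      Hc P (a n n) (fun γ => ((fun ℓ : ↥S => w ℓ.1 γ), q γ))
        = Hc P (a n (n-1)) (fun γ => ((fun ℓ : ↥S => w ℓ.1 γ), q γ)) := by
    intro n hn2 hnM S hS
    have hm2 : n ∈ Finset.Icc 1 M := Finset.mem_Icc.2 ⟨by omega, by omega⟩
    have hm3 : n ∈ Finset.Icc 1 (M+1) := Finset.mem_Icc.2 ⟨by omega, by omega⟩
    have hm4 : n - 1 ∈ Finset.Icc 1 M := Finset.mem_Icc.2 ⟨by omega, by omega⟩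
    have hcond : ∀ ω, ((fun ℓ : ↥S => W ℓ.1 ω), Q ω)
        = ((fun γ => ((fun ℓ : ↥S => w ℓ.1 γ), q γ)) (G ω)) := by
      intro ω
      dsimp only
      refine congrArg₂ Prod.mk ?_ rfl
      funext ℓ
      exact hwG ℓ.1 (hS ℓ.2) ω
    rw [← bridge_condEntropy μ G hGfib (a n n)
      (fun γ => ((fun ℓ : ↥S => w ℓ.1 γ), q γ))
      (A n n) (fun ω => ((fun ℓ : ↥S => W ℓ.1 ω), Q ω)) (haG n n hm3 hm2) hcond,
      ← bridge_condEntropy μ G hGfib (a n (n-1))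
      (fun γ => ((fun ℓ : ↥S => w ℓ.1 γ), q γ))
      (A n (n-1)) (fun ω => ((fun ℓ : ↥S => W ℓ.1 ω), Q ω)) (haG n (n-1) hm3 hm4) hcond]
    exact hpriv n hn2 hnM S hS
  -- apply the main inequality
  have hmain := main_aux P hP0 hP1 M hM L hL w q a HW HWq Hdet1' HdetN' Hdet' Hdec' Hpriv'
  -- rewrite the goal sum
  have hgoal : ∑ k ∈ Finset.Icc 1 M, ∑ n ∈ Finset.Icc 1 (M+1), entropy μ (A n k)
      = ∑ k ∈ Finset.Icc 1 M, ∑ n ∈ Finset.Icc 1 (M+1), He P (a n k) := by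
    refine Finset.sum_congr rfl fun k hk => Finset.sum_congr rfl fun n hn => ?_
    exact bridge_entropy μ G hGfib (a n k) (A n k) (haG n k hn hk)
  rw [ge_iff_le, hgoal]
  have hcast : (2 * ((M:ℝ) + 1) - 4) * L ≤ (2 * (M:ℝ) - 2) * L := by
    nlinarith
  push_cast
  linarith
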